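/- With power cost c(z) = α·z^β (α > 0, β > 1) and K = n·r* where r* = ((R_r + R_a/n²)/(αβ))^{1/(β−1)}, the symmetric equilibrium exploitation rate x*_n solving x·c'(K·x) = (n−1)R_a/n² satisfies n·x*_n → (R_a/R_r)^{1/β} as n → ∞. -/

import Mathlib

/-- Asymptotics of the symmetric equilibrium exploitation rate for power cost:
with `r*_n = ((R_r + R_a/n²)/(αβ))^(1/(β−1))`, `K_n = n·r*_n`, and
`x*_n = (((n−1)R_a/n²)/(αβ·K_n^(β−1)))^(1/β)`, we have
`n·x*_n → (R_a/R_r)^(1/β)` as `n → ∞`. -/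
theorem total_exploitation_rate_limit
    (α β R_r R_a : ℝ) (hα : 0 < α) (hβ : 1 < β) (hRr : 0 < R_r) (hRa : 0 < R_a) :
    Filter.Tendsto
      (fun n : ℕ =>
        (n : ℝ) *
          ((((n : ℝ) - 1) * R_a / (n : ℝ) ^ 2) /
            (α * β * ((n : ℝ) * ((R_r + R_a / (n : ℝ) ^ 2) / (α * β)) ^ (1 / (β - 1)))
              ^ (β - 1))) ^ (1 / β))
      Filter.atTop (nhds ((R_a / R_r) ^ (1 / β))) := by
  have hβ0 : (0:ℝ) < β := lt_trans one_pos hβ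
  have hβ1 : β - 1 ≠ 0 := sub_ne_zero.mpr (ne_of_gt hβ)
  have hαβ : (0:ℝ) < α * β := mul_pos hα hβ0
  -- limit of the simplified expression
  have hg : Filter.Tendsto
      (fun n : ℕ => ((((n:ℝ) - 1) / n) * (R_a / (R_r + R_a / (n:ℝ)^2))) ^ (1/β))
      Filter.atTop (nhds ((R_a / R_r) ^ (1 / β))) := by
    have hsq : Filter.Tendsto (fun n : ℕ => ((n:ℝ)^2)) Filter.atTop Filter.atTop := by
      have := Filter.Tendsto.atTop_mul_atTop₀
        (tendsto_natCast_atTop_atTop (R := ℝ)) (tendsto_natCast_atTop_atTop (R := ℝ))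
      refine this.congr fun n => ?_
      ring
    have h2 : Filter.Tendsto (fun n : ℕ => R_a / (n:ℝ)^2) Filter.atTop (nhds 0) :=
      Filter.Tendsto.div_atTop tendsto_const_nhds hsq
    have h1 : Filter.Tendsto (fun n : ℕ => ((n:ℝ) - 1) / n) Filter.atTop (nhds 1) := by
      have h1' : Filter.Tendsto (fun n : ℕ => 1 - 1/(n:ℝ)) Filter.atTop (nhds 1) := by
        have := tendsto_one_div_atTop_nhds_zero_nat (𝕜 := ℝ)
        have h := (tendsto_const_nhds (x := (1:ℝ)) (f := Filter.atTop (α := ℕ))).sub this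
        simpa using h
      refine h1'.congr' ?_
      filter_upwards [Filter.eventually_ge_atTop 1] with n hn
      have hn0 : (n:ℝ) ≠ 0 := Nat.cast_ne_zero.mpr (by omega)
      field_simp
    have hB : Filter.Tendsto (fun n : ℕ => R_a / (R_r + R_a / (n:ℝ)^2))
        Filter.atTop (nhds (R_a / R_r)) := by
      have := (tendsto_const_nhds (x := R_r) (f := Filter.atTop (α := ℕ))).add h2
      have h3 := Filter.Tendsto.div (tendsto_const_nhds (x := R_a)) this (by simpa using hRr.ne')
      simp only [add_zero] at h3
      exact h3
    have := (h1.mul hB).rpow_const (Or.inr (by positivity : (0:ℝ) ≤ 1/β))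
    simpa using this
  refine hg.congr' ?_
  filter_upwards [Filter.eventually_ge_atTop 1] with n hn
  have hm0 : (0:ℝ) < (n:ℝ) := by exact_mod_cast Nat.lt_of_lt_of_le Nat.zero_lt_one hn
  set m : ℝ := (n:ℝ) with hmdef
  have hm1 : (0:ℝ) ≤ m - 1 := by
    have : (1:ℝ) ≤ m := by rw [hmdef]; exact_mod_cast hn
    linarith
  have hB : (0:ℝ) < R_r + R_a / m^2 := by positivity
  set B : ℝ := R_r + R_a / m^2 with hBdef
  -- simplify the K^(β-1) term
  have key : (m * (B / (α * β)) ^ (1 / (β - 1))) ^ (β - 1) = m ^ (β - 1) * (B / (α * β)) := by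
    rw [Real.mul_rpow hm0.le (Real.rpow_nonneg (by positivity) _)]
    congr 1
    rw [← Real.rpow_mul (by positivity), one_div_mul_cancel hβ1, Real.rpow_one]
  rw [key]
  have hden : α * β * (m ^ (β - 1) * (B / (α * β))) = m ^ (β - 1) * B := by
    field_simp
  rw [hden]
  have hmpow : (0:ℝ) < m ^ (β - 1) := Real.rpow_pos_of_pos hm0 _
  have hinner : (m - 1) * R_a / m ^ 2 / (m ^ (β - 1) * B)
      = (1 / m ^ β) * (((m - 1) / m) * (R_a / B)) := by
    have hmb : m ^ β = m ^ (β - 1) * m := by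
      rw [← Real.rpow_add_one hm0.ne' (β - 1)]
      norm_num
    rw [hmb]
    field_simp
  rw [hinner]
  have hmul : (1 / m ^ β * ((m - 1) / m * (R_a / B))) ^ (1/β)
      = (1 / m ^ β) ^ (1/β) * ((m - 1) / m * (R_a / B)) ^ (1/β) :=
    Real.mul_rpow (by positivity) (by positivity)
  rw [hmul]
  have hfst : m * (1 / m ^ β) ^ (1/β) = 1 := by
    have e1 : (1 / m ^ β) = m ^ (-β) := by rw [Real.rpow_neg hm0.le, one_div]
    rw [e1, ← Real.rpow_mul hm0.le]
    have : -β * (1/β) = -1 := by field_simp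
    rw [this, Real.rpow_neg_one, mul_inv_cancel₀ hm0.ne']
  rw [← mul_assoc, hfst, one_mul]
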